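/- Let n ≥ 2 and let K_n be the complete graph on n vertices. Then ‖M_{K_n}‖_2 := sup{ ‖M_{K_n} f‖_2 / ‖f‖_2 : f : V → ℝ, f ≠ 0 } = max over k ∈ {⌊n/3⌋, ⌈n/3⌉} of ( 1 − k/(2n) + (4kn − 3k²)^{1/2}/(2n) )^{1/2}, where ⌊x⌋ and ⌈x⌉ denote the floor and ceiling of x. Moreover, the supremum is attained by some nonzero function f. -/

import Mathlib

set_option maxHeartbeats 1600000


open scoped Classical

/-- The ball of radius `r` around `e` in the graph metric of `G`
(only vertices reachable from `e` are at finite distance). -/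
noncomputable def gball {V : Type*} [Fintype V] (G : SimpleGraph V) (e : V) (r : ℕ) :
    Finset V :=
  Finset.univ.filter fun m => G.Reachable e m ∧ G.dist e m ≤ r

/-- The centered Hardy–Littlewood maximal function on a finite graph. -/
noncomputable def mxHL {V : Type*} [Fintype V] (G : SimpleGraph V) (f : V → ℝ) (e : V) : ℝ :=
  ⨆ r : ℕ, (1 / ((gball G e r).card : ℝ)) * ∑ m ∈ gball G e r, |f m|

/-- The fractional centered Hardy–Littlewood maximal function on a finite graph. -/
noncomputable def mxFr {V : Type*} [Fintype V] (G : SimpleGraph V) (α : ℝ) (f : V → ℝ)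
    (e : V) : ℝ :=
  ⨆ r : ℕ, ((gball G e r).card : ℝ) ^ (α - 1) * ∑ m ∈ gball G e r, |f m|

/-- The `p`-variation of `f : V → ℝ` with respect to the graph `G`
(vertices at distance `1` are exactly the adjacent ones). -/
noncomputable def vp {V : Type*} [Fintype V] (G : SimpleGraph V) (p : ℝ) (f : V → ℝ) : ℝ :=
  ((1 / 2) * ∑ v : V, ∑ w : V, if G.Adj v w then |f v - f w| ^ p else 0) ^ (1 / p)

/-- The star graph on `Fin n`, with center the vertex with value `0`. -/
def starG (n : ℕ) : SimpleGraph (Fin n) where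
  Adj v w := v ≠ w ∧ (v.val = 0 ∨ w.val = 0)
  symm := ⟨fun _ _ h => ⟨h.1.symm, h.2.symm⟩⟩
  loopless := ⟨fun _ h => h.1 rfl⟩

/-- The `ℓ²` norm of a function on a finite vertex set. -/
noncomputable def nrm2 {V : Type*} [Fintype V] (g : V → ℝ) : ℝ :=
  Real.sqrt (∑ v : V, g v ^ 2)

/-- The candidate value `(1 - k/(2n) + √(4kn - 3k²)/(2n))^(1/2)` for `‖M_{K_n}‖₂`. -/
noncomputable def knConst (n k : ℕ) : ℝ :=
  Real.sqrt (1 - (k : ℝ) / (2 * n) +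
    Real.sqrt (4 * (k : ℝ) * n - 3 * (k : ℝ) ^ 2) / (2 * n))

noncomputable def lam (N K : ℝ) : ℝ :=
  1 - K / (2 * N) + Real.sqrt (4 * K * N - 3 * K ^ 2) / (2 * N)

lemma gball_zero {n : ℕ} (e : Fin n) : gball (⊤ : SimpleGraph (Fin n)) e 0 = {e} := by
  ext m
  simp only [gball, Finset.mem_filter, Finset.mem_univ, true_and, Finset.mem_singleton,
    Nat.le_zero]
  constructor
  · rintro ⟨hr, hd⟩
    rcases (SimpleGraph.dist_eq_zero_iff_eq_or_not_reachable).mp hd with h | h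
    · exact h.symm
    · exact absurd hr h
  · rintro rfl
    exact ⟨SimpleGraph.Reachable.refl _, by simp [SimpleGraph.dist_self]⟩

lemma gball_pos {n : ℕ} (e : Fin n) (r : ℕ) (hr : 1 ≤ r) :
    gball (⊤ : SimpleGraph (Fin n)) e r = Finset.univ := by
  ext m
  simp only [gball, Finset.mem_filter, Finset.mem_univ, true_and, iff_true]
  by_cases h : e = m
  · subst h; exact ⟨SimpleGraph.Reachable.refl _, by simp [SimpleGraph.dist_self]⟩
  · have hadj : (⊤ : SimpleGraph (Fin n)).Adj e m := by simp [h]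
    refine ⟨hadj.reachable, ?_⟩
    calc (⊤ : SimpleGraph (Fin n)).dist e m = 1 :=
          SimpleGraph.dist_eq_one_iff_adj.mpr hadj
      _ ≤ r := hr

lemma mxHL_top {n : ℕ} (hn : 2 ≤ n) (f : Fin n → ℝ) (e : Fin n) :
    mxHL (⊤ : SimpleGraph (Fin n)) f e = max |f e| ((∑ m, |f m|) / n) := by
  have hF : ∀ r : ℕ, (1 / ((gball (⊤ : SimpleGraph (Fin n)) e r).card : ℝ)) *
      ∑ m ∈ gball (⊤ : SimpleGraph (Fin n)) e r, |f m| =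
      if r = 0 then |f e| else (∑ m, |f m|) / n := by
    intro r
    rcases Nat.eq_zero_or_pos r with rfl | hr
    · simp [gball_zero]
    · rw [gball_pos e r hr, if_neg (Nat.pos_iff_ne_zero.mp hr)]
      simp [Finset.card_univ, div_eq_mul_inv, mul_comm]
  have hbdd : BddAbove (Set.range fun r : ℕ =>
      (1 / ((gball (⊤ : SimpleGraph (Fin n)) e r).card : ℝ)) *
      ∑ m ∈ gball (⊤ : SimpleGraph (Fin n)) e r, |f m|) := by
    refine ⟨max |f e| ((∑ m, |f m|) / n), ?_⟩
    rintro _ ⟨r, rfl⟩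
    simp only []
    rw [hF r]
    split
    · exact le_max_left _ _
    · exact le_max_right _ _
  unfold mxHL
  apply le_antisymm
  · refine ciSup_le fun r => ?_
    rw [hF r]; split
    · exact le_max_left _ _
    · exact le_max_right _ _
  · refine max_le ?_ ?_
    · have := le_ciSup hbdd 0
      rw [hF 0] at this; simpa using this
    · have := le_ciSup hbdd 1
      rw [hF 1] at this; simpa using this

lemma qf_facts (N K : ℝ) (hK : 0 ≤ K) (hKN : K ≤ N) (hN : 0 < N) :
    ∃ p q : ℝ, 0 ≤ p ∧ 0 ≤ q ∧
      p ^ 2 = lam N K - (1 + K * (N - K) / N ^ 2) ∧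
      q ^ 2 = lam N K - (N - K) ^ 2 / N ^ 2 ∧
      p * q = (N - K) * Real.sqrt (K * (N - K)) / N ^ 2 := by
  set w := Real.sqrt (4 * K * N - 3 * K ^ 2) with hw
  have hwnn : 0 ≤ w := Real.sqrt_nonneg _
  have hw2 : w ^ 2 = 4 * K * N - 3 * K ^ 2 := by
    rw [hw, Real.sq_sqrt]; nlinarith
  have ha : lam N K - (1 + K * (N - K) / N ^ 2) = (N * w - 3 * N * K + 2 * K ^ 2) / (2 * N ^ 2) := by
    unfold lam; rw [← hw]; field_simp; ring
  have hc : lam N K - (N - K) ^ 2 / N ^ 2 = (3 * N * K - 2 * K ^ 2 + N * w) / (2 * N ^ 2) := by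
    unfold lam; rw [← hw]; field_simp; ring
  have hwle : K * (3 * N - 2 * K) ≤ N * w := by
    nlinarith [sq_nonneg (N * w - K * (3 * N - 2 * K)), mul_nonneg (mul_nonneg hK (sub_nonneg.mpr hKN)) (mul_nonneg (sub_nonneg.mpr hKN) (sub_nonneg.mpr hKN)), mul_nonneg hN.le hwnn, sq_nonneg w]
  have hann : 0 ≤ lam N K - (1 + K * (N - K) / N ^ 2) := by
    rw [ha]; apply div_nonneg _ (by positivity); nlinarith
  have hcnn : 0 ≤ lam N K - (N - K) ^ 2 / N ^ 2 := by
    rw [hc]; apply div_nonneg _ (by positivity)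
    nlinarith [mul_nonneg hN.le hwnn, mul_nonneg hK (sub_nonneg.mpr hKN)]
  refine ⟨Real.sqrt _, Real.sqrt _, Real.sqrt_nonneg _, Real.sqrt_nonneg _,
    Real.sq_sqrt hann, Real.sq_sqrt hcnn, ?_⟩
  rw [← Real.sqrt_mul hann]
  rw [ha, hc]
  have : (N * w - 3 * N * K + 2 * K ^ 2) / (2 * N ^ 2) * ((3 * N * K - 2 * K ^ 2 + N * w) / (2 * N ^ 2))
      = (K * (N - K)) * ((N - K) / N ^ 2) ^ 2 := by
    field_simp
    linear_combination (N^2) * hw2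
  rw [this, Real.sqrt_mul (by nlinarith) , Real.sqrt_sq (div_nonneg (sub_nonneg.mpr hKN) (by positivity))]
  ring

lemma qf_le (N K : ℝ) (hK : 0 ≤ K) (hKN : K ≤ N) (hN : 0 < N) (u v : ℝ) :
    u ^ 2 + ((N - K) / N ^ 2) * (Real.sqrt K * u + Real.sqrt (N - K) * v) ^ 2 ≤
      lam N K * (u ^ 2 + v ^ 2) := by
  obtain ⟨p, q, hp, hq, hp2, hq2, hpq⟩ := qf_facts N K hK hKN hN
  have hKs : Real.sqrt K ^ 2 = K := Real.sq_sqrt hK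
  have hNKs : Real.sqrt (N - K) ^ 2 = N - K := Real.sq_sqrt (sub_nonneg.mpr hKN)
  have hmul : Real.sqrt K * Real.sqrt (N - K) = Real.sqrt (K * (N - K)) :=
    (Real.sqrt_mul hK _).symm
  have hexp : u ^ 2 + ((N - K) / N ^ 2) * (Real.sqrt K * u + Real.sqrt (N - K) * v) ^ 2 =
      (1 + K * (N - K) / N ^ 2) * u ^ 2 +
      2 * ((N - K) * Real.sqrt (K * (N - K)) / N ^ 2) * (u * v) +
      ((N - K) ^ 2 / N ^ 2) * v ^ 2 := by
    rw [← hmul]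
    have h2 : (Real.sqrt K * u + Real.sqrt (N - K) * v) ^ 2 =
        K * u ^ 2 + 2 * (Real.sqrt K * Real.sqrt (N - K)) * (u * v) + (N - K) * v ^ 2 := by
      nlinarith [hKs, hNKs]
    rw [h2]; ring
  rw [hexp, ← hpq]
  have h1 : p ^ 2 * u ^ 2 = lam N K * u ^ 2 - (1 + K * (N - K) / N ^ 2) * u ^ 2 := by
    rw [hp2]; ring
  have h2 : q ^ 2 * v ^ 2 = lam N K * v ^ 2 - (N - K) ^ 2 / N ^ 2 * v ^ 2 := by
    rw [hq2]; ring
  nlinarith [sq_nonneg (p * u - q * v), h1, h2]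

lemma sqrt_q_ge (N J : ℝ) (hJ : 3 * J ≤ 3 * N) (hJ3 : N ≤ 3 * J) :
    2 * N - 3 * J ≤ Real.sqrt (4 * J * N - 3 * J ^ 2) := by
  rcases le_or_gt (2 * N - 3 * J) 0 with h | h
  · exact h.trans (Real.sqrt_nonneg _)
  · rw [show (2 * N - 3 * J : ℝ) = Real.sqrt ((2 * N - 3 * J) ^ 2) from
      (Real.sqrt_sq h.le).symm]
    apply Real.sqrt_le_sqrt
    nlinarith

lemma sqrt_q_le (N J : ℝ) (hJ : 0 ≤ J) (hJ3 : 3 * J ≤ N) :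
    Real.sqrt (4 * J * N - 3 * J ^ 2) ≤ 2 * N - 3 * J := by
  rw [show (2 * N - 3 * J : ℝ) = Real.sqrt ((2 * N - 3 * J) ^ 2) from
      (Real.sqrt_sq (by nlinarith)).symm]
  apply Real.sqrt_le_sqrt
  nlinarith

/-- g is nondecreasing on [0, N/3]. -/
lemma g_mono_left (N K J : ℝ) (hK : 0 ≤ K) (hKJ : K ≤ J) (hJ : 3 * J ≤ N) (hN : 0 < N) :
    Real.sqrt (4 * K * N - 3 * K ^ 2) - K ≤ Real.sqrt (4 * J * N - 3 * J ^ 2) - J := by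
  set sK := Real.sqrt (4 * K * N - 3 * K ^ 2) with hsK
  set sJ := Real.sqrt (4 * J * N - 3 * J ^ 2) with hsJ
  have hKN : K ≤ N := by nlinarith
  have hJN : J ≤ N := by nlinarith
  have hsK2 : sK ^ 2 = 4 * K * N - 3 * K ^ 2 := Real.sq_sqrt (by nlinarith)
  have hsJ2 : sJ ^ 2 = 4 * J * N - 3 * J ^ 2 := Real.sq_sqrt (by nlinarith)
  have hKle : sK ≤ 2 * N - 3 * K := sqrt_q_le N K hK (by nlinarith)
  have hJle : sJ ≤ 2 * N - 3 * J := sqrt_q_le N J (by linarith) hJ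
  have hmono : sK ≤ sJ := Real.sqrt_le_sqrt (by nlinarith)
  have hprod : (sJ - sK) * (sJ + sK) = (J - K) * (4 * N - 3 * J - 3 * K) := by
    nlinarith [hsK2, hsJ2]
  have hpos : 0 < 4 * N - 3 * J - 3 * K := by nlinarith
  nlinarith [mul_le_mul_of_nonneg_left (add_le_add hJle hKle) (sub_nonneg.mpr hmono)]

/-- g is nonincreasing on [N/3, N]. -/
lemma g_mono_right (N K J : ℝ) (hJ3 : N ≤ 3 * J) (hJK : J ≤ K) (hKN : K ≤ N) (hN : 0 < N) :
    Real.sqrt (4 * K * N - 3 * K ^ 2) - K ≤ Real.sqrt (4 * J * N - 3 * J ^ 2) - J := by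
  set sK := Real.sqrt (4 * K * N - 3 * K ^ 2) with hsK
  set sJ := Real.sqrt (4 * J * N - 3 * J ^ 2) with hsJ
  have hJ : 0 ≤ J := by nlinarith
  have hsK2 : sK ^ 2 = 4 * K * N - 3 * K ^ 2 := Real.sq_sqrt (by nlinarith)
  have hsJ2 : sJ ^ 2 = 4 * J * N - 3 * J ^ 2 := Real.sq_sqrt (by nlinarith)
  have hJge : 2 * N - 3 * J ≤ sJ := sqrt_q_ge N J (by nlinarith) hJ3
  have hKge : 2 * N - 3 * K ≤ sK := sqrt_q_ge N K (by nlinarith) (by nlinarith)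
  rcases le_or_gt sK sJ with h | h
  · linarith
  · have hprod : (sK - sJ) * (sK + sJ) = (K - J) * (4 * N - 3 * K - 3 * J) := by
      nlinarith [hsK2, hsJ2]
    rcases le_or_gt (4 * N - 3 * K - 3 * J) 0 with hc | hc
    · exfalso
      have : sK ^ 2 ≤ sJ ^ 2 := by nlinarith
      nlinarith [Real.sqrt_nonneg (4 * J * N - 3 * J ^ 2)]
    · nlinarith [mul_le_mul_of_nonneg_left (add_le_add hKge hJge) (sub_nonneg.mpr h.le)]

lemma lam_mono (N K J : ℝ) (hN : 0 < N)
    (h : Real.sqrt (4 * K * N - 3 * K ^ 2) - K ≤ Real.sqrt (4 * J * N - 3 * J ^ 2) - J) :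
    lam N K ≤ lam N J := by
  unfold lam
  have h1 : (1 : ℝ) - K / (2 * N) + Real.sqrt (4 * K * N - 3 * K ^ 2) / (2 * N)
      = 1 + (Real.sqrt (4 * K * N - 3 * K ^ 2) - K) / (2 * N) := by ring
  have h2 : (1 : ℝ) - J / (2 * N) + Real.sqrt (4 * J * N - 3 * J ^ 2) / (2 * N)
      = 1 + (Real.sqrt (4 * J * N - 3 * J ^ 2) - J) / (2 * N) := by ring
  rw [h1, h2]
  have := (div_le_div_iff_of_pos_right (show (0:ℝ) < 2 * N by linarith)).mpr h
  linarith

lemma lam_le_max (n k : ℕ) (hn : 2 ≤ n) (hk : k ≤ n) :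
    lam n k ≤ max (lam n (n / 3 : ℕ)) (lam n ((n + 2) / 3 : ℕ)) := by
  have hN : (0 : ℝ) < n := by positivity
  rcases le_or_gt (3 * k) n with h | h
  · refine le_max_of_le_left (lam_mono _ _ _ hN ?_)
    apply g_mono_left _ _ _ (by positivity) _ _ hN
    · exact_mod_cast Nat.le_div_iff_mul_le (by norm_num) |>.mpr (by omega)
    · have : 3 * (n / 3) ≤ n := by omega
      exact_mod_cast this
  · refine le_max_of_le_right (lam_mono _ _ _ hN ?_)
    apply g_mono_right _ _ _ _ _ _ hN
    · have : n ≤ 3 * ((n + 2) / 3) := by omega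
      exact_mod_cast this
    · have : (n + 2) / 3 ≤ k := by omega
      exact_mod_cast this
    · exact_mod_cast hk

lemma sum_max_le (n : ℕ) (hn : 2 ≤ n) (f : Fin n → ℝ) :
    ∑ i, max |f i| ((∑ m, |f m|) / n) ^ 2 ≤
      max (lam n (n / 3 : ℕ)) (lam n ((n + 2) / 3 : ℕ)) * ∑ i, f i ^ 2 := by
  classical
  have hN : (0 : ℝ) < n := by positivity
  set A := (∑ m, |f m|) / n with hA
  have hA0 : 0 ≤ A := by
    apply div_nonneg _ hN.le
    exact Finset.sum_nonneg fun i _ => abs_nonneg _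
  set T := Finset.univ.filter (fun i : Fin n => A ≤ |f i|) with hT
  set Tc := Finset.univ.filter (fun i : Fin n => ¬ A ≤ |f i|) with hTc
  set k := T.card with hk
  have hkn : k ≤ n := by
    calc k ≤ Finset.univ.card := Finset.card_filter_le _ _
    _ = n := Finset.card_univ.trans (Fintype.card_fin n)
  have hcard : T.card + Tc.card = n := by
    rw [hT, hTc, Finset.card_filter_add_card_filter_not]
    exact Finset.card_univ.trans (Fintype.card_fin n)
  have hKcast : ((n - k : ℕ) : ℝ) = (n : ℝ) - k := by
    push_cast [Nat.cast_sub hkn]; ring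
  set t := ∑ i ∈ T, f i ^ 2 with ht
  set s := ∑ i ∈ Tc, f i ^ 2 with hs
  have ht0 : 0 ≤ t := Finset.sum_nonneg fun i _ => sq_nonneg _
  have hs0 : 0 ≤ s := Finset.sum_nonneg fun i _ => sq_nonneg _
  have hts : t + s = ∑ i, f i ^ 2 := Finset.sum_filter_add_sum_filter_not _ _ _
  have hsplit : ∑ i, max |f i| A ^ 2 = t + (Tc.card : ℝ) * A ^ 2 := by
    rw [← Finset.sum_filter_add_sum_filter_not Finset.univ (fun i => A ≤ |f i|)
      (fun i => max |f i| A ^ 2)]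
    congr 1
    · rw [ht]
      apply Finset.sum_congr rfl
      intro i hi
      rw [max_eq_left (Finset.mem_filter.mp hi).2, sq_abs]
    · rw [← hTc, Finset.sum_congr rfl (fun i hi => ?_), Finset.sum_const, nsmul_eq_mul]
      rw [max_eq_right (le_of_not_ge (Finset.mem_filter.mp hi).2)]
  -- Cauchy-Schwarz on each part
  have hCS : ∀ (S : Finset (Fin n)), ∑ i ∈ S, |f i| ≤
      Real.sqrt (S.card) * Real.sqrt (∑ i ∈ S, f i ^ 2) := by
    intro S
    have h1 : (∑ i ∈ S, |f i|) ^ 2 ≤ (S.card : ℝ) * ∑ i ∈ S, f i ^ 2 := by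
      have := sq_sum_le_card_mul_sum_sq (s := S) (f := fun i => |f i|)
      simpa [sq_abs] using this
    have h2 : (0:ℝ) ≤ ∑ i ∈ S, |f i| := Finset.sum_nonneg fun i _ => abs_nonneg _
    calc ∑ i ∈ S, |f i| = Real.sqrt ((∑ i ∈ S, |f i|) ^ 2) := (Real.sqrt_sq h2).symm
      _ ≤ Real.sqrt ((S.card : ℝ) * ∑ i ∈ S, f i ^ 2) := Real.sqrt_le_sqrt h1
      _ = Real.sqrt (S.card) * Real.sqrt (∑ i ∈ S, f i ^ 2) :=
          Real.sqrt_mul (by positivity) _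
  have hNA : (n : ℝ) * A = ∑ m, |f m| := by
    rw [hA]; field_simp
  have hsum_split : (∑ m, |f m|) = ∑ i ∈ T, |f i| + ∑ i ∈ Tc, |f i| :=
    (Finset.sum_filter_add_sum_filter_not _ _ _).symm
  have hAle : (n : ℝ) * A ≤ Real.sqrt k * Real.sqrt t + Real.sqrt ((n : ℝ) - k) * Real.sqrt s := by
    rw [hNA, hsum_split]
    have h1 := hCS T
    have h2 := hCS Tc
    have hTc_card : ((Tc.card : ℕ) : ℝ) = (n : ℝ) - k := by
      rw [← hKcast]; congr 1; omega
    rw [hTc_card] at h2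
    exact add_le_add h1 h2
  have hA2 : ((n : ℝ) - k) * A ^ 2 ≤ (((n : ℝ) - k) / (n : ℝ) ^ 2) *
      (Real.sqrt k * Real.sqrt t + Real.sqrt ((n : ℝ) - k) * Real.sqrt s) ^ 2 := by
    have hsq : ((n : ℝ) * A) ^ 2 ≤
        (Real.sqrt k * Real.sqrt t + Real.sqrt ((n : ℝ) - k) * Real.sqrt s) ^ 2 := by
      apply sq_le_sq' _ hAle
      have : 0 ≤ (n : ℝ) * A := by positivity
      nlinarith [hAle]
    have hnk0 : (0:ℝ) ≤ (n : ℝ) - k := by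
      have : (k : ℝ) ≤ n := by exact_mod_cast hkn
      linarith
    calc ((n : ℝ) - k) * A ^ 2 = (((n : ℝ) - k) / (n : ℝ) ^ 2) * (((n:ℝ) * A) ^ 2) := by
          field_simp
      _ ≤ _ := by
          apply mul_le_mul_of_nonneg_left hsq (by positivity)
  have hqf := qf_le (n : ℝ) (k : ℝ) (Nat.cast_nonneg k) (by exact_mod_cast hkn) hN
    (Real.sqrt t) (Real.sqrt s)
  rw [Real.sq_sqrt ht0, Real.sq_sqrt hs0] at hqf
  have hTc_card : ((Tc.card : ℕ) : ℝ) = (n : ℝ) - k := by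
    rw [← hKcast]; congr 1; omega
  have hlam := lam_le_max n k hn hkn
  have hfs0 : 0 ≤ ∑ i, f i ^ 2 := Finset.sum_nonneg fun i _ => sq_nonneg _
  calc ∑ i, max |f i| A ^ 2 = t + (Tc.card : ℝ) * A ^ 2 := hsplit
    _ = t + ((n : ℝ) - k) * A ^ 2 := by rw [hTc_card]
    _ ≤ t + (((n : ℝ) - k) / (n : ℝ) ^ 2) *
        (Real.sqrt k * Real.sqrt t + Real.sqrt ((n : ℝ) - k) * Real.sqrt s) ^ 2 := by
        linarith
    _ ≤ lam n k * (t + s) := hqf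
    _ = lam n k * ∑ i, f i ^ 2 := by rw [hts]
    _ ≤ _ := mul_le_mul_of_nonneg_right hlam hfs0

lemma one_le_lam (N K : ℝ) (hK : 0 ≤ K) (hKN : K ≤ N) (hN : 0 < N) : 1 ≤ lam N K := by
  have h : K ≤ Real.sqrt (4 * K * N - 3 * K ^ 2) := by
    have : Real.sqrt (K ^ 2) ≤ Real.sqrt (4 * K * N - 3 * K ^ 2) := by
      apply Real.sqrt_le_sqrt; nlinarith
    rwa [Real.sqrt_sq hK] at this
  unfold lam
  have h2 : 0 ≤ (Real.sqrt (4 * K * N - 3 * K ^ 2) - K) / (2 * N) := by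
    apply div_nonneg (by linarith) (by linarith)
  have h3 : (Real.sqrt (4 * K * N - 3 * K ^ 2) - K) / (2 * N)
      = Real.sqrt (4 * K * N - 3 * K ^ 2) / (2 * N) - K / (2 * N) := by ring
  linarith [h2, h3.symm.le, h3.le]

lemma lam_zero (N : ℝ) : lam N 0 = 1 := by
  unfold lam; norm_num

lemma exists_opt (n : ℕ) (hn : 2 ≤ n) (k : ℕ) (hk1 : 1 ≤ k) (hk2 : k < n) :
    ∃ f : Fin n → ℝ, f ≠ 0 ∧ (0 < ∑ i, f i ^ 2) ∧
      ∑ i, max |f i| ((∑ m, |f m|) / n) ^ 2 = lam n k * ∑ i, f i ^ 2 := by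
  classical
  have hN : (0 : ℝ) < n := by positivity
  set N : ℝ := (n : ℝ) with hNdef
  set K : ℝ := (k : ℝ) with hKdef
  have hK0 : (0 : ℝ) < K := by rw [hKdef]; exact_mod_cast hk1
  have hKN : K < N := by rw [hKdef, hNdef]; exact_mod_cast hk2
  obtain ⟨p, q, hp, hq, hp2, hq2, hpq⟩ := qf_facts N K hK0.le hKN.le hN
  obtain ⟨L, hL⟩ : ∃ x : ℝ, x = lam N K := ⟨_, rfl⟩
  rw [← hL] at hp2 hq2
  obtain ⟨u, hu⟩ : ∃ x : ℝ, x = p * q := ⟨_, rfl⟩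
  obtain ⟨v, hv⟩ : ∃ x : ℝ, x = p ^ 2 := ⟨_, rfl⟩
  rw [← hu] at hpq
  rw [← hv] at hp2
  have hsK : Real.sqrt K > 0 := Real.sqrt_pos.mpr hK0
  have hsNK : Real.sqrt (N - K) > 0 := Real.sqrt_pos.mpr (by linarith)
  have hsK2 : Real.sqrt K ^ 2 = K := Real.sq_sqrt hK0.le
  have hsNK2 : Real.sqrt (N - K) ^ 2 = N - K := Real.sq_sqrt (by linarith)
  have hmulK : Real.sqrt K * Real.sqrt (N - K) = Real.sqrt (K * (N - K)) :=
    (Real.sqrt_mul hK0.le _).symm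
  have hu_pos : 0 < u := by
    rw [hpq]
    apply div_pos _ (by positivity)
    exact mul_pos (by linarith) (Real.sqrt_pos.mpr (mul_pos hK0 (by linarith)))
  have hv0 : 0 ≤ v := hv ▸ sq_nonneg p
  obtain ⟨b, hb⟩ : ∃ x : ℝ, x = u / Real.sqrt K := ⟨_, rfl⟩
  obtain ⟨c, hc⟩ : ∃ x : ℝ, x = v / Real.sqrt (N - K) := ⟨_, rfl⟩
  have hb_pos : 0 < b := hb ▸ div_pos hu_pos hsK
  have hc0 : 0 ≤ c := hc ▸ div_nonneg hv0 hsNK.le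
  have hbK : b * Real.sqrt K = u := hb ▸ div_mul_cancel₀ _ (ne_of_gt hsK)
  have hcNK : c * Real.sqrt (N - K) = v := hc ▸ div_mul_cancel₀ _ (ne_of_gt hsNK)
  -- the function
  set f : Fin n → ℝ := fun i => if (i : ℕ) < k then b else c with hf
  have hf_nonneg : ∀ i, 0 ≤ f i := by
    intro i; rw [hf]; dsimp only; split
    · exact hb_pos.le
    · exact hc0
  have habs : ∀ i, |f i| = f i := fun i => abs_of_nonneg (hf_nonneg i)
  -- cardinalities
  have hfilter : Finset.univ.filter (fun i : Fin n => (i : ℕ) < k) =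
      Finset.Iio (⟨k, hk2⟩ : Fin n) := by
    ext i; simp [Finset.mem_Iio, Fin.lt_def]
  have hcard1 : (Finset.univ.filter (fun i : Fin n => (i : ℕ) < k)).card = k := by
    rw [hfilter, Fin.card_Iio]
  have hcard2 : (Finset.univ.filter (fun i : Fin n => ¬ (i : ℕ) < k)).card = n - k := by
    have := Finset.card_filter_add_card_filter_not (s := Finset.univ)
      (p := fun i : Fin n => (i : ℕ) < k)
    rw [hcard1, Finset.card_univ, Fintype.card_fin] at this
    omega
  have hnk_cast : ((n - k : ℕ) : ℝ) = N - K := by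
    rw [hNdef, hKdef]; push_cast [Nat.cast_sub hk2.le]; ring
  -- sum computations
  have hsum_ite : ∀ (X Y : ℝ), ∑ i : Fin n, (if (i : ℕ) < k then X else Y)
      = K * X + (N - K) * Y := by
    intro X Y
    rw [Finset.sum_ite, Finset.sum_const, Finset.sum_const, hcard1, hcard2,
      nsmul_eq_mul, nsmul_eq_mul, hnk_cast, hKdef]
  have hsum_abs : ∑ m, |f m| = Real.sqrt K * u + Real.sqrt (N - K) * v := by
    calc ∑ m, |f m| = ∑ m, f m := by simp [habs]
      _ = K * b + (N - K) * c := by rw [hf]; exact hsum_ite b c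
      _ = Real.sqrt K * u + Real.sqrt (N - K) * v := by
          rw [← hbK, ← hcNK]; linear_combination (-b) * hsK2 + (-c) * hsNK2
  obtain ⟨A, hA⟩ : ∃ x : ℝ, x = (∑ m, |f m|) / (n : ℝ) := ⟨_, rfl⟩
  have hNA : N * A = Real.sqrt K * u + Real.sqrt (N - K) * v := by
    rw [hA, hsum_abs, ← hNdef]; field_simp
  -- key inequality √K * v ≤ √(N-K) * u
  have hw_le : Real.sqrt (4 * K * N - 3 * K ^ 2) ≤ 2 * N - K := by
    rw [show (2 * N - K : ℝ) = Real.sqrt ((2 * N - K) ^ 2) from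
      (Real.sqrt_sq (by linarith)).symm]
    apply Real.sqrt_le_sqrt; nlinarith
  have hKey : Real.sqrt K * v ≤ Real.sqrt (N - K) * u := by
    have hv_eq : v = (N * Real.sqrt (4 * K * N - 3 * K ^ 2) - 3 * N * K + 2 * K ^ 2)
        / (2 * N ^ 2) := by
      rw [hp2, hL]; unfold lam; field_simp; ring
    have hu_eq : Real.sqrt (N - K) * u = (N - K) ^ 2 * Real.sqrt K / N ^ 2 := by
      rw [hpq, ← hmulK]
      linear_combination ((N - K) * Real.sqrt K / N ^ 2) * hsNK2
    rw [hv_eq, hu_eq]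
    have h1 : N * Real.sqrt (4 * K * N - 3 * K ^ 2) ≤ N * (2 * N - K) :=
      mul_le_mul_of_nonneg_left hw_le hN.le
    have hX : N * Real.sqrt (4 * K * N - 3 * K ^ 2) - 3 * N * K + 2 * K ^ 2
        ≤ 2 * (N - K) ^ 2 := by nlinarith
    rw [show (N - K) ^ 2 * Real.sqrt K / N ^ 2
        = Real.sqrt K * ((2 * (N - K) ^ 2) / (2 * N ^ 2)) by ring]
    apply mul_le_mul_of_nonneg_left _ hsK.le
    exact (div_le_div_iff_of_pos_right (by positivity)).mpr hX
  have hAb : A ≤ b := by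
    rw [← mul_le_mul_iff_left₀ (mul_pos hsK hN)]
    have hbside : b * (Real.sqrt K * N) = N * u := by
      rw [← mul_assoc, hbK]; ring
    have hAside : A * (Real.sqrt K * N) = K * u + (Real.sqrt K * Real.sqrt (N - K)) * v := by
      have : A * (Real.sqrt K * N) = Real.sqrt K * (N * A) := by ring
      rw [this, hNA]; linear_combination u * hsK2
    rw [hbside, hAside]
    have h5 : Real.sqrt (N - K) * (Real.sqrt (N - K) * u) = (N - K) * u := by
      linear_combination u * hsNK2
    have h6 := mul_le_mul_of_nonneg_left hKey hsNK.le
    linarith only [h5, h6]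
  have hcA : c ≤ A := by
    rw [← mul_le_mul_iff_left₀ (mul_pos hsNK hN)]
    have hcside : c * (Real.sqrt (N - K) * N) = N * v := by
      rw [← mul_assoc, hcNK]; ring
    have hAside : A * (Real.sqrt (N - K) * N)
        = (Real.sqrt K * Real.sqrt (N - K)) * u + (N - K) * v := by
      have : A * (Real.sqrt (N - K) * N) = Real.sqrt (N - K) * (N * A) := by ring
      rw [this, hNA]; linear_combination v * hsNK2
    rw [hcside, hAside]
    have h5 : Real.sqrt K * (Real.sqrt K * v) = K * v := by
      linear_combination v * hsK2
    have h6 := mul_le_mul_of_nonneg_left hKey hsK.le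
    linarith only [h5, h6]
  -- max values
  have hmax : ∀ i : Fin n, max |f i| A = if (i : ℕ) < k then b else A := by
    intro i
    rw [habs, hf]; dsimp only; split
    · exact max_eq_left hAb
    · exact max_eq_right hcA
  have hsum_f2 : ∑ i, f i ^ 2 = u ^ 2 + v ^ 2 := by
    calc ∑ i, f i ^ 2 = ∑ i : Fin n, (if (i : ℕ) < k then b ^ 2 else c ^ 2) := by
          apply Finset.sum_congr rfl; intro i _; rw [hf]; dsimp only; split <;> rfl
      _ = K * b ^ 2 + (N - K) * c ^ 2 := hsum_ite _ _
      _ = u ^ 2 + v ^ 2 := by linear_combination (b * Real.sqrt K + u) * hbK - b ^ 2 * hsK2 + (c * Real.sqrt (N - K) + v) * hcNK - c ^ 2 * hsNK2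
  have hsum_max : ∑ i, max |f i| A ^ 2 = u ^ 2 + (N - K) * A ^ 2 := by
    calc ∑ i, max |f i| A ^ 2 = ∑ i : Fin n, (if (i : ℕ) < k then b ^ 2 else A ^ 2) := by
          apply Finset.sum_congr rfl; intro i _; rw [hmax]; split <;> rfl
      _ = K * b ^ 2 + (N - K) * A ^ 2 := hsum_ite _ _
      _ = u ^ 2 + (N - K) * A ^ 2 := by linear_combination (b * Real.sqrt K + u) * hbK - b ^ 2 * hsK2
  -- the eigen equality
  have hNA2 : (N - K) * A ^ 2 = ((N - K) / N ^ 2) *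
      (Real.sqrt K * u + Real.sqrt (N - K) * v) ^ 2 := by
    rw [← hNA]; field_simp
  have hexp : (Real.sqrt K * u + Real.sqrt (N - K) * v) ^ 2 =
      K * u ^ 2 + 2 * (Real.sqrt K * Real.sqrt (N - K)) * (u * v) + (N - K) * v ^ 2 := by
    linear_combination u ^ 2 * hsK2 + v ^ 2 * hsNK2
  have heig : u ^ 2 + (N - K) * A ^ 2 = L * (u ^ 2 + v ^ 2) := by
    rw [hNA2, hexp, hmulK]
    have haa : (1 : ℝ) + K * (N - K) / N ^ 2 = L - p ^ 2 := by rw [← hv, hp2]; ring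
    have hcc : (N - K) ^ 2 / N ^ 2 = L - q ^ 2 := by rw [hq2]; ring
    have hform : u ^ 2 + (N - K) / N ^ 2 *
        (K * u ^ 2 + 2 * Real.sqrt (K * (N - K)) * (u * v) + (N - K) * v ^ 2)
        = (1 + K * (N - K) / N ^ 2) * u ^ 2
          + 2 * ((N - K) * Real.sqrt (K * (N - K)) / N ^ 2) * (u * v)
          + ((N - K) ^ 2 / N ^ 2) * v ^ 2 := by
      field_simp; ring
    rw [hform, haa, hcc, ← hpq, hu, hv]
    ring
  refine ⟨f, ?_, ?_, ?_⟩
  · intro h0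
    have : f ⟨0, by omega⟩ = 0 := by rw [h0]; rfl
    rw [hf] at this; dsimp only at this
    rw [if_pos (by simpa using Nat.pos_of_ne_zero (by omega : k ≠ 0))] at this
    exact absurd this (ne_of_gt hb_pos)
  · rw [hsum_f2]; positivity
  · rw [← hA, hsum_max, hsum_f2, heig, hL, hNdef, hKdef]


lemma knConst_eq (n k : ℕ) : knConst n k = Real.sqrt (lam n k) := rfl

lemma max_knConst_eq (n : ℕ) :
    max (knConst n (n / 3)) (knConst n ((n + 2) / 3)) =
      Real.sqrt (max (lam n (n / 3 : ℕ)) (lam n ((n + 2) / 3 : ℕ))) := by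
  rcases le_total (lam n (n / 3 : ℕ)) (lam n ((n + 2) / 3 : ℕ)) with h | h
  · rw [max_eq_right h, knConst_eq, knConst_eq,
      max_eq_right (Real.sqrt_le_sqrt h)]
  · rw [max_eq_left h, knConst_eq, knConst_eq,
      max_eq_left (Real.sqrt_le_sqrt h)]

lemma sum_sq_pos {n : ℕ} (f : Fin n → ℝ) (hf : f ≠ 0) : 0 < ∑ i, f i ^ 2 := by
  obtain ⟨i, hi⟩ := Function.ne_iff.mp hf
  exact Finset.sum_pos' (fun j _ => sq_nonneg _)
    ⟨i, Finset.mem_univ i, by rw [← sq_abs]; exact pow_pos (abs_pos.mpr hi) 2⟩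

lemma nrm2_mxHL (n : ℕ) (hn : 2 ≤ n) (f : Fin n → ℝ) :
    nrm2 (mxHL (⊤ : SimpleGraph (Fin n)) f) =
      Real.sqrt (∑ i, max |f i| ((∑ m, |f m|) / n) ^ 2) := by
  unfold nrm2
  congr 1
  exact Finset.sum_congr rfl fun i _ => by rw [mxHL_top hn f i]

lemma one_le_lam_nat (n k : ℕ) (hn : 2 ≤ n) (hk : k ≤ n) : 1 ≤ lam n k := by
  apply one_le_lam _ _ (by positivity) (by exact_mod_cast hk) (by positivity)

lemma ratio_le (n : ℕ) (hn : 2 ≤ n) (f : Fin n → ℝ) (hf : f ≠ 0) :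
    nrm2 (mxHL (⊤ : SimpleGraph (Fin n)) f) / nrm2 f ≤
      max (knConst n (n / 3)) (knConst n ((n + 2) / 3)) := by
  have hS : 0 < ∑ i, f i ^ 2 := sum_sq_pos f hf
  have hnf : 0 < nrm2 f := by unfold nrm2; exact Real.sqrt_pos.mpr hS
  rw [div_le_iff₀ hnf, max_knConst_eq]
  calc nrm2 (mxHL (⊤ : SimpleGraph (Fin n)) f)
      = Real.sqrt (∑ i, max |f i| ((∑ m, |f m|) / n) ^ 2) := nrm2_mxHL n hn f
    _ ≤ Real.sqrt (max (lam n (n / 3 : ℕ)) (lam n ((n + 2) / 3 : ℕ)) * ∑ i, f i ^ 2) :=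
        Real.sqrt_le_sqrt (sum_max_le n hn f)
    _ = Real.sqrt (max (lam n (n / 3 : ℕ)) (lam n ((n + 2) / 3 : ℕ))) * nrm2 f := by
        have h0 : (0:ℝ) ≤ max (lam n (n / 3 : ℕ)) (lam n ((n + 2) / 3 : ℕ)) :=
          le_trans zero_le_one ((one_le_lam_nat n (n / 3) hn (by omega)).trans
            (le_max_left _ _))
        rw [show nrm2 f = Real.sqrt (∑ i, f i ^ 2) from rfl, ← Real.sqrt_mul h0]

lemma choose_k (n : ℕ) (hn : 2 ≤ n) :
    ∃ k : ℕ, 1 ≤ k ∧ k < n ∧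
      lam n k = max (lam n (n / 3 : ℕ)) (lam n ((n + 2) / 3 : ℕ)) := by
  by_cases h : lam n (n / 3 : ℕ) ≤ lam n ((n + 2) / 3 : ℕ)
  · exact ⟨(n + 2) / 3, by omega, by omega, (max_eq_right h).symm⟩
  · refine ⟨n / 3, ?_, by omega, (max_eq_left (le_of_not_ge h)).symm⟩
    by_contra hz
    have h0 : n / 3 = 0 := by omega
    rw [h0, Nat.cast_zero, lam_zero] at h
    exact h (one_le_lam_nat n ((n + 2) / 3) hn (by omega))

lemma exists_extremal (n : ℕ) (hn : 2 ≤ n) :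
    ∃ f : Fin n → ℝ, f ≠ 0 ∧
      nrm2 (mxHL (⊤ : SimpleGraph (Fin n)) f) / nrm2 f =
        max (knConst n (n / 3)) (knConst n ((n + 2) / 3)) := by
  obtain ⟨k, hk1, hk2, hkmax⟩ := choose_k n hn
  obtain ⟨f, hf0, hS, hsum⟩ := exists_opt n hn k hk1 hk2
  refine ⟨f, hf0, ?_⟩
  have hnf : nrm2 f = Real.sqrt (∑ i, f i ^ 2) := rfl
  have hlam0 : (0:ℝ) ≤ lam n k := le_trans (by norm_num) (one_le_lam_nat n k hn hk2.le)
  rw [nrm2_mxHL n hn f, hsum, Real.sqrt_mul hlam0, hnf, mul_div_assoc,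
    div_self (ne_of_gt (Real.sqrt_pos.mpr hS)), mul_one, max_knConst_eq, hkmax]

/-- the `ℓ²` norm of the Hardy–Littlewood maximal operator on the
complete graph `K_n` equals the maximum over `k ∈ {⌊n/3⌋, ⌈n/3⌉}` of
`(1 - k/(2n) + √(4kn - 3k²)/(2n))^(1/2)`, and the supremum is attained. -/
theorem completeGraph_l2_norm (n : ℕ) (hn : 2 ≤ n) :
    sSup {c : ℝ | ∃ f : Fin n → ℝ, f ≠ 0 ∧
        c = nrm2 (mxHL (⊤ : SimpleGraph (Fin n)) f) / nrm2 f} =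
      max (knConst n (n / 3)) (knConst n ((n + 2) / 3)) ∧
    ∃ f : Fin n → ℝ, f ≠ 0 ∧
      nrm2 (mxHL (⊤ : SimpleGraph (Fin n)) f) / nrm2 f =
        max (knConst n (n / 3)) (knConst n ((n + 2) / 3)) := by
  obtain ⟨f₀, hf₀, hf₀eq⟩ := exists_extremal n hn
  constructor
  · apply le_antisymm
    · refine csSup_le ⟨_, ⟨f₀, hf₀, hf₀eq.symm⟩⟩ ?_
      rintro c ⟨f, hf, rfl⟩
      exact ratio_le n hn f hf
    · apply le_csSup
      · exact ⟨max (knConst n (n / 3)) (knConst n ((n + 2) / 3)),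
          by rintro c ⟨f, hf, rfl⟩; exact ratio_le n hn f hf⟩
      · exact ⟨f₀, hf₀, hf₀eq.symm⟩
  · exact ⟨f₀, hf₀, hf₀eq⟩
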